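/- Let β > 1 and let β_m be the unique positive root of 1 = Σ_{i=1}^m ε_i*(1,β)/β_m^i, where (ε_1*(1,β), ε_2*(1,β), …) is the infinite β-expansion of 1 and m satisfies ε_m*(1,β) ≥ 1. Then β_m < β and β_m increases to β as m → ∞. -/

import Mathlib

open Filter MeasureTheory Set

/-- The β-transformation `T_β(x) = βx - ⌊βx⌋`. -/
noncomputable def betaT (β x : ℝ) : ℝ := Int.fract (β * x)

/-- The `(n+1)`-st digit of the β-expansion of `x` (0-indexed):
`betaDigit β x n = ⌊β ⬝ T_β^n(x)⌋`. -/
noncomputable def betaDigit (β x : ℝ) (n : ℕ) : ℕ := (⌊β * (betaT β)^[n] x⌋).toNat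

/-- The set `Σ_β^n` of β-admissible words of length `n`. -/
def admissibleWords (β : ℝ) (n : ℕ) : Set (Fin n → ℕ) :=
  {w | ∃ x ∈ Set.Ico (0:ℝ) 1, ∀ i : Fin n, betaDigit β x i = w i}

/-- The set `Σ_β` of β-admissible digit sequences. -/
def admissibleSeqs (β : ℝ) : Set (ℕ → ℕ) :=
  {e | ∃ x ∈ Set.Ico (0:ℝ) 1, ∀ i, betaDigit β x i = e i}

/-- The cylinder `I_n(w)` of a word `w`. -/
def cylinder (β : ℝ) {n : ℕ} (w : Fin n → ℕ) : Set ℝ :=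
  {x | x ∈ Set.Ico (0:ℝ) 1 ∧ ∀ i : Fin n, betaDigit β x i = w i}

/-- The partial digit sum `S_n(x,β)`. -/
noncomputable def Sdig (β x : ℝ) (n : ℕ) : ℝ := ∑ i ∈ Finset.range n, (betaDigit β x i : ℝ)

/-- The digits of the β-expansion of 1: `oneDigit β n = ⌊β ⬝ T_β^n(1)⌋`
(0-indexed, so `oneDigit β 0 = ε_1(1,β)`). -/
noncomputable def oneDigit (β : ℝ) (n : ℕ) : ℕ := (⌊β * (betaT β)^[n] 1⌋).toNat

open Classical in
/-- The infinite β-expansion `(ε_1^*(1,β), ε_2^*(1,β), …)` of 1: if the expansion of 1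
terminates with last nonzero digit at index `n`, it is the periodic sequence
`(ε_1(1,β),…,ε_n(1,β)-1)^∞`; otherwise it is the expansion of 1 itself. -/
noncomputable def oneStar (β : ℝ) : ℕ → ℕ :=
  if h : ∃ n, oneDigit β n ≠ 0 ∧ ∀ m, n < m → oneDigit β m = 0 then
    fun k => if k % (h.choose + 1) = h.choose then oneDigit β h.choose - 1
      else oneDigit β (k % (h.choose + 1))
  else oneDigit β

section Aux
variable {β : ℝ} (hβ : 1 < β)

private lemma xmem : ∀ n, 0 ≤ (betaT β)^[n] 1 ∧ (betaT β)^[n] 1 ≤ 1 := by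
  intro n
  cases n with
  | zero => simp
  | succ n =>
    rw [Function.iterate_succ_apply']
    exact ⟨Int.fract_nonneg _, (Int.fract_lt_one _).le⟩

include hβ

private lemma keyid : ∀ n, (∑ i ∈ Finset.range n, (oneDigit β i : ℝ) / β ^ (i+1))
    + (betaT β)^[n] 1 / β ^ n = 1 := by
  have hb0 : (0:ℝ) < β := lt_trans one_pos hβ
  intro n
  induction n with
  | zero => simp
  | succ n ih =>
    set x := (betaT β)^[n] 1 with hx
    have hx0 : 0 ≤ x := (xmem n).1
    have hfl : ((oneDigit β n : ℝ)) = (⌊β * x⌋ : ℤ) := by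
      rw [oneDigit]
      have : (0:ℤ) ≤ ⌊β * x⌋ := Int.floor_nonneg.2 (by positivity)
      rw [← hx]
      exact_mod_cast congrArg (Int.cast : ℤ → ℝ) (Int.toNat_of_nonneg this)
    have hit : (betaT β)^[n+1] 1 = β * x - ⌊β * x⌋ := by
      rw [Function.iterate_succ_apply', ← hx, betaT, Int.fract]
    rw [Finset.sum_range_succ, hit]
    have hpow : β ^ (n+1) ≠ 0 := by positivity
    have : (oneDigit β n : ℝ) / β ^ (n+1) + (β * x - ⌊β * x⌋) / β ^ (n+1) = x / β ^ n := by
      rw [hfl]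
      field_simp
      ring
    linarith [ih, this]

omit hβ in
private lemma zero_stays (n : ℕ) (h : (betaT β)^[n] 1 = 0) :
    ∀ m, n ≤ m → (betaT β)^[m] 1 = 0 := by
  intro m hm
  obtain ⟨k, rfl⟩ := Nat.exists_eq_add_of_le hm
  induction k with
  | zero => simpa using h
  | succ k ih =>
    rw [show n + (k+1) = (n+k) + 1 by ring, Function.iterate_succ_apply', ih (Nat.le_add_right n k), betaT]
    simp


private lemma expansion : (∀ m, ∑ i ∈ Finset.range m, (oneStar β i : ℝ) / β ^ (i+1) < 1) ∧
    Tendsto (fun m => ∑ i ∈ Finset.range m, (oneStar β i : ℝ) / β ^ (i+1)) atTop (nhds 1) := by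
  classical
  have hb0 : (0:ℝ) < β := lt_trans one_pos hβ
  by_cases hP : ∃ n, oneDigit β n ≠ 0 ∧ ∀ m, n < m → oneDigit β m = 0
  · -- terminating case
    have hos : oneStar β = fun k => if k % (hP.choose + 1) = hP.choose
        then oneDigit β hP.choose - 1 else oneDigit β (k % (hP.choose + 1)) := by
      rw [oneStar, dif_pos hP]
    set N := hP.choose with hNdef
    obtain ⟨hN1, hN2⟩ := hP.choose_spec
    have hN1' : 1 ≤ oneDigit β N := Nat.one_le_iff_ne_zero.2 hN1
    -- all iterates from N+1 on vanish
    have hflzero : ∀ m, N + 1 ≤ m → (⌊β * (betaT β)^[m] 1⌋ : ℤ) = 0 := by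
      intro m hm
      have hd : oneDigit β m = 0 := hN2 m (by omega)
      have h1 : (⌊β * (betaT β)^[m] 1⌋ : ℤ) ≤ 0 := Int.toNat_eq_zero.1 hd
      have h2 : (0:ℤ) ≤ ⌊β * (betaT β)^[m] 1⌋ :=
        Int.floor_nonneg.2 (by have := (xmem (β := β) m).1; positivity)
      omega
    have hstep : ∀ k, (betaT β)^[N + 1 + k] 1 = β ^ k * (betaT β)^[N+1] 1 := by
      intro k
      induction k with
      | zero => simp
      | succ k ih =>
        rw [show N + 1 + (k+1) = (N + 1 + k) + 1 by ring, Function.iterate_succ_apply',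
          betaT, Int.fract, hflzero _ (by omega), ih]
        push_cast
        ring
    have hxz : (betaT β)^[N+1] 1 = 0 := by
      have hle : ∀ k : ℕ, (betaT β)^[N+1] 1 ≤ (1/β) ^ k := by
        intro k
        have h1 : β ^ k * (betaT β)^[N+1] 1 ≤ 1 := by
          rw [← hstep k]; exact (xmem _).2
        rw [div_pow, one_pow]
        rw [le_div_iff₀ (by positivity)]
        linarith [h1]
      have h0 : Tendsto (fun k : ℕ => (1/β) ^ k) atTop (nhds 0) :=
        tendsto_pow_atTop_nhds_zero_of_lt_one (by positivity)
          (by rw [div_lt_one hb0]; exact hβ)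
      have := ge_of_tendsto h0 (Filter.Eventually.of_forall hle)
      have := (xmem (β := β) (N+1)).1
      linarith
    have hfull : ∑ i ∈ Finset.range (N+1), (oneDigit β i : ℝ) / β ^ (i+1) = 1 := by
      have := keyid hβ (N+1)
      rw [hxz] at this
      simpa using this
    set c : ℝ := 1 / β ^ (N+1) with hcdef
    have hc0 : 0 < c := by positivity
    have hc1 : c < 1 := by
      rw [hcdef, div_lt_one (by positivity)]
      exact one_lt_pow₀ hβ (by omega)
    have hcj : ∀ j : ℕ, c ^ j = 1 / β ^ ((N+1)*j) := by
      intro j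
      rw [hcdef, div_pow, one_pow, ← pow_mul]
    -- block formula
    have hQ : ∀ j, ∑ i ∈ Finset.range ((N+1)*j), (oneStar β i : ℝ) / β ^ (i+1)
        = 1 - c ^ j := by
      intro j
      induction j with
      | zero => simp
      | succ j ih =>
        rw [Nat.mul_succ, Finset.sum_range_add, ih]
        have hblock : ∑ i ∈ Finset.range (N+1),
            (oneStar β ((N+1)*j + i) : ℝ) / β ^ ((N+1)*j + i + 1)
            = c ^ j - c ^ (j+1) := by
          have hterm : ∀ i ∈ Finset.range (N+1),
              (oneStar β ((N+1)*j + i) : ℝ) / β ^ ((N+1)*j + i + 1)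
              = c ^ j * ((oneDigit β i : ℝ) / β ^ (i+1))
                - (if i = N then c ^ j * (1 / β ^ (i+1)) else 0) := by
            intro i hi
            have hi' : i < N + 1 := Finset.mem_range.1 hi
            have hmod : ((N+1)*j + i) % (N+1) = i := by
              rw [Nat.mul_add_mod]
              exact Nat.mod_eq_of_lt hi'
            have hpow : β ^ ((N+1)*j + i + 1) = β ^ ((N+1)*j) * β ^ (i+1) := by
              rw [← pow_add]; ring_nf
            rw [hos]
            simp only [hmod]
            by_cases hiN : i = N
            · rw [if_pos hiN, if_pos hiN, hpow, hcj]
              rw [Nat.cast_sub hN1']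
              subst hiN
              field_simp
              norm_num
            · rw [if_neg hiN, if_neg hiN, hpow, hcj]
              field_simp
              simp
          rw [Finset.sum_congr rfl hterm, Finset.sum_sub_distrib, ← Finset.mul_sum, hfull]
          rw [Finset.sum_ite_eq' (Finset.range (N+1)) N fun i => c ^ j * (1 / β ^ (i+1))]
          rw [if_pos (Finset.mem_range.2 (by omega))]
          rw [mul_one, pow_succ, hcdef]
          ring
        rw [hblock]
        ring
    have hnonneg : ∀ i : ℕ, 0 ≤ (oneStar β i : ℝ) / β ^ (i+1) := by
      intro i; positivity
    have hmono : Monotone (fun m => ∑ i ∈ Finset.range m, (oneStar β i : ℝ) / β ^ (i+1)) := by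
      intro a b hab
      exact Finset.sum_le_sum_of_subset_of_nonneg (Finset.range_subset_range.2 hab)
        (fun i _ _ => hnonneg i)
    constructor
    · intro m
      calc ∑ i ∈ Finset.range m, (oneStar β i : ℝ) / β ^ (i+1)
          ≤ ∑ i ∈ Finset.range ((N+1)*m), (oneStar β i : ℝ) / β ^ (i+1) :=
            hmono (Nat.le_mul_of_pos_left m (Nat.succ_pos N))
        _ = 1 - c ^ m := hQ m
        _ < 1 := by have : (0:ℝ) < c ^ m := by positivity
                    linarith
    · have hdiv : Tendsto (fun m : ℕ => m / (N+1)) atTop atTop := by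
        apply tendsto_atTop_atTop.2
        intro b
        exact ⟨b * (N+1), fun m hm => (Nat.le_div_iff_mul_le (Nat.succ_pos N)).2 hm⟩
      have hc0' : Tendsto (fun m : ℕ => c ^ (m / (N+1))) atTop (nhds 0) :=
        (tendsto_pow_atTop_nhds_zero_of_lt_one hc0.le hc1).comp hdiv
      have hlow : Tendsto (fun m : ℕ => 1 - c ^ (m / (N+1))) atTop (nhds 1) := by
        have := (tendsto_const_nhds : Tendsto (fun _ : ℕ => (1:ℝ)) atTop (nhds 1)).sub hc0'
        simpa using this
      apply tendsto_of_tendsto_of_tendsto_of_le_of_le hlow tendsto_const_nhds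
      · intro m
        calc 1 - c ^ (m / (N+1))
            = ∑ i ∈ Finset.range ((N+1)*(m/(N+1))), (oneStar β i : ℝ) / β ^ (i+1) :=
              (hQ _).symm
          _ ≤ ∑ i ∈ Finset.range m, (oneStar β i : ℝ) / β ^ (i+1) := by
              apply hmono
              rw [mul_comm]
              exact Nat.div_mul_le_self m (N+1)
      · intro m
        calc ∑ i ∈ Finset.range m, (oneStar β i : ℝ) / β ^ (i+1)
            ≤ ∑ i ∈ Finset.range ((N+1)*m), (oneStar β i : ℝ) / β ^ (i+1) :=
              hmono (Nat.le_mul_of_pos_left m (Nat.succ_pos N))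
          _ = 1 - c ^ m := hQ m
          _ ≤ 1 := by have : (0:ℝ) ≤ c ^ m := by positivity
                      linarith
  · -- non-terminating case
    have hos : oneStar β = oneDigit β := by rw [oneStar, dif_neg hP]
    have hxpos : ∀ n, 0 < (betaT β)^[n] 1 := by
      by_contra hc
      push_neg at hc
      obtain ⟨n, hn⟩ := hc
      have hex : ∃ n, (betaT β)^[n] 1 = 0 := ⟨n, le_antisymm hn (xmem n).1⟩
      set M := Nat.find hex with hMdef
      have hMz : (betaT β)^[M] 1 = 0 := Nat.find_spec hex
      have hM0 : M ≠ 0 := by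
        intro h
        rw [h] at hMz
        simp at hMz
      obtain ⟨K, hK⟩ := Nat.exists_eq_succ_of_ne_zero hM0
      have hxK : 0 < (betaT β)^[K] 1 := by
        rcases lt_or_eq_of_le (xmem (β := β) K).1 with h | h
        · exact h
        · exact absurd h.symm (Nat.find_min hex (by omega))
      apply hP
      refine ⟨K, ?_, ?_⟩
      · have hfr : Int.fract (β * (betaT β)^[K] 1) = 0 := by
          have h1 : (betaT β)^[K+1] 1 = 0 := by rw [← Nat.succ_eq_add_one, ← hK]; exact hMz
          rw [Function.iterate_succ_apply', betaT] at h1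
          exact h1
        have hfl : (⌊β * (betaT β)^[K] 1⌋ : ℝ) = β * (betaT β)^[K] 1 := by
          have := Int.floor_add_fract (β * (betaT β)^[K] 1)
          rw [hfr] at this
          linarith
        have hpos : (0:ℝ) < β * (betaT β)^[K] 1 := by positivity
        have : (1:ℤ) ≤ ⌊β * (betaT β)^[K] 1⌋ := by
          by_contra hcon
          push_neg at hcon
          have : (⌊β * (betaT β)^[K] 1⌋ : ℤ) ≤ 0 := by omega
          have : (⌊β * (betaT β)^[K] 1⌋ : ℝ) ≤ 0 := by exact_mod_cast this
          linarith
        rw [oneDigit]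
        omega
      · intro m hm
        have : (betaT β)^[m] 1 = 0 := zero_stays M hMz m (by omega)
        rw [oneDigit, this]
        simp
    constructor
    · intro m
      have := keyid hβ m
      have h1 : 0 < (betaT β)^[m] 1 / β ^ m := by
        have := hxpos m
        positivity
      rw [hos]
      linarith
    · rw [hos]
      have hup : ∀ m, ∑ i ∈ Finset.range m, (oneDigit β i : ℝ) / β ^ (i+1) ≤ 1 := by
        intro m
        have := keyid hβ m
        have h1 : 0 ≤ (betaT β)^[m] 1 / β ^ m := by
          have := (xmem (β := β) m).1
          positivity
        linarith
      have hlo : ∀ m, 1 - (1/β) ^ m ≤ ∑ i ∈ Finset.range m, (oneDigit β i : ℝ) / β ^ (i+1) := by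
        intro m
        have hk := keyid hβ m
        have h1 : (betaT β)^[m] 1 / β ^ m ≤ (1/β) ^ m := by
          rw [div_pow, one_pow, div_le_div_iff₀ (by positivity) (by positivity)]
          have := (xmem (β := β) m).2
          nlinarith [pow_pos hb0 m]
        linarith
      have hlow : Tendsto (fun m : ℕ => 1 - (1/β) ^ m) atTop (nhds 1) := by
        have h0 : Tendsto (fun m : ℕ => (1/β) ^ m) atTop (nhds 0) :=
          tendsto_pow_atTop_nhds_zero_of_lt_one (by positivity)
            (by rw [div_lt_one hb0]; exact hβ)
        have := (tendsto_const_nhds : Tendsto (fun _ : ℕ => (1:ℝ)) atTop (nhds 1)).sub h0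
        simpa using this
      exact tendsto_of_tendsto_of_tendsto_of_le_of_le hlow tendsto_const_nhds hlo hup

end Aux

/-- For each `m` with `ε_{m+1}^*(1,β) ≥ 1` let `r m` be the positive root of
`1 = Σ_{i=1}^{m+1} ε_i^*(1,β) x^{-i}`. Then `r m < β`, `r` is monotone on such
indices, and `r m → β` along them. -/
theorem stmt12 (β : ℝ) (hβ : 1 < β) (r : ℕ → ℝ)
    (hr : ∀ m : ℕ, 1 ≤ oneStar β m → 0 < r m ∧
      ∑ i ∈ Finset.range (m + 1), (oneStar β i : ℝ) / r m ^ (i + 1) = 1) :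
    (∀ m : ℕ, 1 ≤ oneStar β m → r m < β) ∧
    (∀ m₁ m₂ : ℕ, m₁ ≤ m₂ → 1 ≤ oneStar β m₁ → 1 ≤ oneStar β m₂ → r m₁ ≤ r m₂) ∧
    Tendsto r (atTop ⊓ Filter.principal {m : ℕ | 1 ≤ oneStar β m}) (nhds β) := by
  have hb0 : (0:ℝ) < β := lt_trans one_pos hβ
  obtain ⟨hlt, htend⟩ := expansion (β := β) hβ
  have part1 : ∀ m : ℕ, 1 ≤ oneStar β m → r m < β := by
    intro m hm
    obtain ⟨hrm0, hrme⟩ := hr m hm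
    by_contra hc
    push_neg at hc
    have h1 : ∑ i ∈ Finset.range (m+1), (oneStar β i : ℝ) / r m ^ (i+1)
        ≤ ∑ i ∈ Finset.range (m+1), (oneStar β i : ℝ) / β ^ (i+1) := by
      apply Finset.sum_le_sum
      intro i _
      gcongr
    have h2 := hlt (m+1)
    linarith
  refine ⟨part1, ?_, ?_⟩
  · intro m₁ m₂ h12 h1 h2
    obtain ⟨h10, h1e⟩ := hr m₁ h1
    obtain ⟨h20, h2e⟩ := hr m₂ h2
    by_contra hc
    push_neg at hc
    have hA : ∑ i ∈ Finset.range (m₁+1), (oneStar β i : ℝ) / r m₁ ^ (i+1)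
        ≤ ∑ i ∈ Finset.range (m₂+1), (oneStar β i : ℝ) / r m₁ ^ (i+1) :=
      Finset.sum_le_sum_of_subset_of_nonneg (Finset.range_subset_range.2 (by omega))
        (fun i _ _ => by positivity)
    have hB : ∑ i ∈ Finset.range (m₂+1), (oneStar β i : ℝ) / r m₁ ^ (i+1)
        < ∑ i ∈ Finset.range (m₂+1), (oneStar β i : ℝ) / r m₂ ^ (i+1) := by
      apply Finset.sum_lt_sum
      · intro i _
        gcongr
      · refine ⟨m₂, Finset.self_mem_range_succ m₂, ?_⟩
        have hge1 : (1:ℝ) ≤ (oneStar β m₂ : ℝ) := by exact_mod_cast h2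
        apply div_lt_div_of_pos_left (by linarith) (by positivity)
        exact pow_lt_pow_left₀ hc h20.le (by omega)
    linarith
  · rw [Metric.tendsto_nhds]
    intro ε hε
    set ε' := min ε β / 2 with hε'def
    have hε'0 : 0 < ε' := by
      have : 0 < min ε β := lt_min hε hb0
      positivity
    have hε'ε : ε' ≤ ε := by
      have : min ε β ≤ ε := min_le_left _ _
      rw [hε'def]; linarith
    have hε'β : ε' < β := by
      have : min ε β ≤ β := min_le_right _ _
      rw [hε'def]; linarith
    set γ := β - ε' with hγdef
    have hγ0 : 0 < γ := by rw [hγdef]; linarith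
    have hγβ : γ < β := by rw [hγdef]; linarith
    set q := β / γ with hqdef
    have hq1 : 1 < q := (one_lt_div hγ0).2 hγβ
    have hq0 : 0 < q := lt_trans one_pos hq1
    have hev : ∀ᶠ n in atTop, 1/q < ∑ i ∈ Finset.range n, (oneStar β i : ℝ) / β ^ (i+1) :=
      htend.eventually (eventually_gt_nhds (by rw [div_lt_one hq0]; exact hq1))
    obtain ⟨m₀, hm₀⟩ := Filter.eventually_atTop.1 hev
    rw [Filter.eventually_inf_principal]
    filter_upwards [Filter.eventually_ge_atTop m₀] with m hm hmS
    obtain ⟨hrm0, hrme⟩ := hr m hmS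
    have hup : r m < β := part1 m hmS
    have hlo : γ < r m := by
      by_contra hcon
      push_neg at hcon
      have hstep1 : ∑ i ∈ Finset.range (m+1), (oneStar β i : ℝ) / γ ^ (i+1)
          ≤ ∑ i ∈ Finset.range (m+1), (oneStar β i : ℝ) / r m ^ (i+1) := by
        apply Finset.sum_le_sum
        intro i _
        gcongr
      have hstep2 : ∀ i ∈ Finset.range (m+1),
          q * ((oneStar β i : ℝ) / β ^ (i+1)) ≤ (oneStar β i : ℝ) / γ ^ (i+1) := by
        intro i _
        have hγne : γ ≠ 0 := ne_of_gt hγ0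
        have hβne : β ≠ 0 := ne_of_gt hb0
        have hqe : (oneStar β i : ℝ) / γ ^ (i+1)
            = (oneStar β i : ℝ) / β ^ (i+1) * q ^ (i+1) := by
          rw [hqdef, div_pow]
          field_simp
        rw [hqe]
        have hqp : q ≤ q ^ (i+1) := le_self_pow₀ hq1.le (by omega)
        have hnn' : 0 ≤ (oneStar β i : ℝ) / β ^ (i+1) := by positivity
        nlinarith
      have hsum : q * ∑ i ∈ Finset.range (m+1), (oneStar β i : ℝ) / β ^ (i+1)
          ≤ ∑ i ∈ Finset.range (m+1), (oneStar β i : ℝ) / γ ^ (i+1) := by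
        rw [Finset.mul_sum]
        exact Finset.sum_le_sum hstep2
      have hPm : 1/q < ∑ i ∈ Finset.range (m+1), (oneStar β i : ℝ) / β ^ (i+1) :=
        hm₀ (m+1) (by omega)
      have : (1:ℝ) < q * ∑ i ∈ Finset.range (m+1), (oneStar β i : ℝ) / β ^ (i+1) := by
        rw [div_lt_iff₀ hq0] at hPm
        nlinarith
      linarith
    rw [Real.dist_eq, abs_lt]
    constructor <;> [skip; linarith]
    rw [hγdef] at hlo
    linarith
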